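/- Let the positions of vehicles on a line be such that consecutive interdistances I_1, I_2, ... are i.i.d. Exp(λ), and let τ_n be the distance between consecutive retransmitting nodes on the shortest path with coverage radius R. Then for x₁ ≤ R, the first hop length satisfies F_{τ_1}(x_1) = e^{-λ(R - x_1)}(1 - e^{-λ x_1}), and for x_1 ≥ R, F_{τ_1}(x_1) = 1 - e^{-λ x_1}. -/

import Mathlib

open MeasureTheory

/-- Position of the `n`-th vehicle: partial sum of the interdistances. -/
def vehiclePos {Ω : Type*} (I : ℕ → Ω → ℝ) (n : ℕ) (ω : Ω) : ℝ :=
  ∑ i ∈ Finset.range (n + 1), I i ω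

open Classical in
/-- Distance `τ_1` from the origin to the first retransmitting node: the farthest
vehicle within coverage `R` if there is one, else the first vehicle. -/
noncomputable def firstHop {Ω : Type*} (I : ℕ → Ω → ℝ) (R : ℝ) (ω : Ω) : ℝ :=
  if ∃ n, vehiclePos I n ω ≤ R then
    sSup {y | (∃ n, y = vehiclePos I n ω) ∧ y ≤ R}
  else vehiclePos I 0 ω

section Aux

open MeasureTheory ProbabilityTheory Real Set
open scoped ENNReal

private lemma expMeasure_Iic_eq {lam : ℝ} (hlam : 0 < lam) (x : ℝ) :
    expMeasure lam (Set.Iic x)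
      = ENNReal.ofReal (if 0 ≤ x then 1 - Real.exp (-(lam * x)) else 0) := by
  have h : expMeasure lam = volume.withDensity (exponentialPDF lam) := rfl
  rw [h, withDensity_apply _ measurableSet_Iic, lintegral_exponentialPDF_eq_antiDeriv hlam]

private lemma expLaw {Ω : Type*} [MeasurableSpace Ω] (μ : Measure Ω) [IsProbabilityMeasure μ]
    {lam : ℝ} (hlam : 0 < lam) {f : Ω → ℝ} (hf : Measurable f)
    (h1 : ∀ x : ℝ, 0 ≤ x → (μ {ω | f ω ≤ x}).toReal = 1 - Real.exp (-(lam * x)))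
    (h2 : ∀ x : ℝ, x < 0 → μ {ω | f ω ≤ x} = 0) :
    Measure.map f μ = expMeasure lam := by
  have : IsProbabilityMeasure (Measure.map f μ) := Measure.isProbabilityMeasure_map hf.aemeasurable
  refine Measure.ext_of_Iic _ _ fun a => ?_
  rw [Measure.map_apply hf measurableSet_Iic, expMeasure_Iic_eq hlam]
  have hs : f ⁻¹' Set.Iic a = {ω | f ω ≤ a} := rfl
  rw [hs]
  by_cases ha : 0 ≤ a
  · rw [if_pos ha, ← h1 a ha, ENNReal.ofReal_toReal (measure_ne_top μ _)]
  · rw [if_neg ha, h2 a (lt_of_not_ge ha), ENNReal.ofReal_zero]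

private lemma tail_eq {Ω : Type*} [MeasurableSpace Ω] (μ : Measure Ω) [IsProbabilityMeasure μ]
    {lam : ℝ} (hlam : 0 < lam) {f : Ω → ℝ} (hf : Measurable f)
    (hlaw : Measure.map f μ = expMeasure lam) {b : ℝ} (hb : 0 ≤ b) :
    μ {ω | b < f ω} = ENNReal.ofReal (Real.exp (-(lam * b))) := by
  have h1 : {ω | b < f ω} = f ⁻¹' (Set.Ioi b) := rfl
  have h2 : μ (f ⁻¹' Set.Ioi b) = Measure.map f μ (Set.Ioi b) :=
    (Measure.map_apply hf measurableSet_Ioi).symm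
  rw [h1, h2, hlaw]
  have : IsProbabilityMeasure (expMeasure lam) := isProbabilityMeasure_expMeasure hlam
  have hcompl : Set.Ioi b = (Set.Iic b)ᶜ := Set.compl_Iic.symm
  rw [hcompl, measure_compl measurableSet_Iic (measure_ne_top _ _), measure_univ,
    expMeasure_Iic_eq hlam, if_pos hb]
  have he1 : Real.exp (-(lam * b)) ≤ 1 := by
    rw [Real.exp_le_one_iff]
    nlinarith
  rw [← ENNReal.ofReal_one, ← ENNReal.ofReal_sub _ (by linarith [Real.exp_pos (-(lam * b))])]
  congr 1
  ring

private def hopSet {Ω : Type*} (I : ℕ → Ω → ℝ) (m k : ℕ) (a b : ℝ) : Set Ω :=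
  {ω | (∑ i ∈ Finset.range k, I (m + i) ω) ≤ a ∧
    b < (∑ i ∈ Finset.range k, I (m + i) ω) + I (m + k) ω}

private lemma hopSet_meas {Ω : Type*} [MeasurableSpace Ω] {I : ℕ → Ω → ℝ}
    (hmeas : ∀ n, Measurable (I n)) (m k : ℕ) (a b : ℝ) :
    MeasurableSet (hopSet I m k a b) := by
  have h1 : Measurable fun ω => ∑ i ∈ Finset.range k, I (m + i) ω :=
    Finset.measurable_sum _ fun i _ => hmeas _
  exact (measurableSet_le h1 measurable_const).inter
    (measurableSet_lt measurable_const (h1.add (hmeas _)))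

private lemma key {Ω : Type*} [MeasurableSpace Ω] (μ : Measure Ω) [IsProbabilityMeasure μ]
    {lam : ℝ} (hlam : 0 < lam) {I : ℕ → Ω → ℝ} (hmeas : ∀ n, Measurable (I n))
    (hlaw : ∀ n, Measure.map (I n) μ = expMeasure lam)
    (hindep : ProbabilityTheory.iIndepFun I μ) :
    ∀ k m : ℕ, ∀ a b : ℝ, a ≤ b →
      μ (hopSet I m k a b)
        = if 0 ≤ a then
            ENNReal.ofReal (Real.exp (-(lam * b)) * (lam * a) ^ k / k.factorial) else 0 := by
  intro k
  induction k with
  | zero =>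
    intro m a b hab
    by_cases ha : 0 ≤ a
    · have hb : 0 ≤ b := le_trans ha hab
      have hset : hopSet I m 0 a b = {ω | b < I m ω} := by
        ext ω; simp [hopSet, ha]
      rw [hset, tail_eq μ hlam (hmeas m) (hlaw m) hb, if_pos ha]
      simp [Nat.factorial]
    · have hset : hopSet I m 0 a b = ∅ := by
        ext ω; simp [hopSet, ha]
      rw [hset, if_neg ha, measure_empty]
  | succ k ih =>
    intro m a b hab
    classical
    set T : Ω → ℝ × ℝ := fun ω => (∑ i ∈ Finset.range k, I (m + 1 + i) ω,
      (∑ i ∈ Finset.range k, I (m + 1 + i) ω) + I (m + 1 + k) ω) with hT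
    have hUmeas : Measurable fun ω => ∑ i ∈ Finset.range k, I (m + 1 + i) ω :=
      Finset.measurable_sum _ fun i _ => hmeas _
    have hTmeas : Measurable T := hUmeas.prodMk (hUmeas.add (hmeas _))
    set C : Set (ℝ × ℝ × ℝ) := {p | p.1 + p.2.1 ≤ a ∧ b < p.1 + p.2.2} with hCdef
    have hC : MeasurableSet C :=
      (measurableSet_le (measurable_fst.add measurable_snd.fst) measurable_const).inter
        (measurableSet_lt measurable_const (measurable_fst.add measurable_snd.snd))
    have hrw : hopSet I m (k + 1) a b = (fun ω => (I m ω, T ω)) ⁻¹' C := by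
      ext ω
      have hsum : ∑ i ∈ Finset.range (k + 1), I (m + i) ω
          = I m ω + ∑ i ∈ Finset.range k, I (m + 1 + i) ω := by
        rw [Finset.sum_range_succ']
        simp only [Nat.add_zero]
        rw [add_comm]
        congr 1
        exact Finset.sum_congr rfl fun i _ => by rw [show m + (i + 1) = m + 1 + i from by omega]
      simp only [hopSet, Set.mem_setOf_eq, Set.mem_preimage, hCdef, hT, hsum,
        show m + (k + 1) = m + 1 + k from by omega]
      exact and_congr Iff.rfl (by rw [add_assoc])
    -- independence of `I m` and `T`
    set S : Finset ℕ := Finset.Icc (m + 1) (m + 1 + k) with hSdef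
    have hdisj : Disjoint ({m} : Finset ℕ) S := by
      simp only [Finset.disjoint_left, Finset.mem_singleton, hSdef, Finset.mem_Icc]
      rintro x rfl
      omega
    have h0 := hindep.indepFun_finset {m} S hdisj hmeas
    have hsum_all : ∀ ω : Ω, (∑ j : S, I j ω)
        = (∑ i ∈ Finset.range k, I (m + 1 + i) ω) + I (m + 1 + k) ω := by
      intro ω
      rw [Finset.sum_coe_sort S (fun j => I j ω)]
      have h1 : S = Finset.Ico (m + 1) (m + 1 + k + 1) := by
        rw [hSdef, Finset.Ico_add_one_right_eq_Icc]
      rw [h1, Finset.sum_Ico_eq_sum_range,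
        show m + 1 + k + 1 - (m + 1) = k + 1 from by omega, Finset.sum_range_succ]
    have hsum_first : ∀ ω : Ω,
        (∑ j ∈ Finset.univ.filter (fun j : S => (j : ℕ) ≤ m + k), I j ω)
          = ∑ i ∈ Finset.range k, I (m + 1 + i) ω := by
      intro ω
      rw [Finset.sum_filter,
        Finset.sum_coe_sort S (fun j => if j ≤ m + k then I j ω else 0),
        ← Finset.sum_filter]
      have h1 : S.filter (fun n => n ≤ m + k) = Finset.Ico (m + 1) (m + k + 1) := by
        ext n
        simp only [hSdef, Finset.mem_filter, Finset.mem_Icc, Finset.mem_Ico]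
        omega
      rw [h1, Finset.sum_Ico_eq_sum_range, show m + k + 1 - (m + 1) = k from by omega]
    have hpairIndep : IndepFun (I m) T μ := by
      have hφ₁ : Measurable (fun v : ({m} : Finset ℕ) → ℝ =>
          v ⟨m, Finset.mem_singleton_self m⟩) := measurable_pi_apply _
      have hφ₂ : Measurable (fun v : S → ℝ =>
          ((∑ j ∈ Finset.univ.filter (fun j : S => (j : ℕ) ≤ m + k), v j), ∑ j : S, v j)) :=
        (Finset.measurable_sum _ fun j _ => measurable_pi_apply j).prodMk
          (Finset.measurable_sum _ fun j _ => measurable_pi_apply j)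
      have hcomp := h0.comp hφ₁ hφ₂
      have e1 : (fun v : ({m} : Finset ℕ) → ℝ => v ⟨m, Finset.mem_singleton_self m⟩) ∘
          (fun ω (i : ({m} : Finset ℕ)) => I i ω) = I m := rfl
      have e2 : (fun v : S → ℝ =>
          ((∑ j ∈ Finset.univ.filter (fun j : S => (j : ℕ) ≤ m + k), v j), ∑ j : S, v j)) ∘
          (fun ω (i : S) => I i ω) = T := by
        funext ω
        exact Prod.ext (hsum_first ω) (hsum_all ω)
      rwa [e1, e2] at hcomp
    haveI : IsProbabilityMeasure (Measure.map T μ) := Measure.isProbabilityMeasure_map hTmeas.aemeasurable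
    have hpair := (ProbabilityTheory.indepFun_iff_map_prod_eq_prod_map_map
      (hmeas m).aemeasurable hTmeas.aemeasurable).1 hpairIndep
    have hmain : μ (hopSet I m (k + 1) a b)
        = ∫⁻ t, Measure.map T μ (Prod.mk t ⁻¹' C) ∂(Measure.map (I m) μ) := by
      rw [hrw, ← Measure.map_apply ((hmeas m).prodMk hTmeas) hC, hpair, Measure.prod_apply hC]
    have hslice : ∀ t : ℝ, Measure.map T μ (Prod.mk t ⁻¹' C)
        = μ (hopSet I (m + 1) k (a - t) (b - t)) := by
      intro t
      rw [Measure.map_apply hTmeas (hC.preimage measurable_prodMk_left)]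
      congr 1
      ext ω
      simp only [Set.mem_preimage, Set.mem_setOf_eq, hCdef, hT, hopSet]
      constructor
      · rintro ⟨h1, h2⟩; exact ⟨by linarith, by linarith⟩
      · rintro ⟨h1, h2⟩; exact ⟨by linarith, by linarith⟩
    have hIH : ∀ t : ℝ, μ (hopSet I (m + 1) k (a - t) (b - t))
        = if t ≤ a then
            ENNReal.ofReal (Real.exp (-(lam * (b - t))) * (lam * (a - t)) ^ k / k.factorial)
          else 0 := by
      intro t
      rw [ih (m + 1) (a - t) (b - t) (by linarith)]
      by_cases h : t ≤ a
      · rw [if_pos (by linarith : (0:ℝ) ≤ a - t), if_pos h]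
      · have h' : a - t < 0 := by rw [not_le] at h; linarith
        rw [if_neg (not_le.mpr h'), if_neg h]
    set F : ℝ → ℝ≥0∞ := fun t => if t ≤ a then
        ENNReal.ofReal (Real.exp (-(lam * (b - t))) * (lam * (a - t)) ^ k / k.factorial)
      else 0 with hF
    have hFmeas : Measurable F := by
      refine Measurable.ite measurableSet_Iic (Measurable.ennreal_ofReal (by fun_prop))
        measurable_const
    have hstep : μ (hopSet I m (k + 1) a b) = ∫⁻ t, exponentialPDF lam t * F t := by
      rw [hmain]
      have h1 : ∫⁻ t, Measure.map T μ (Prod.mk t ⁻¹' C) ∂(Measure.map (I m) μ)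
          = ∫⁻ t, F t ∂(Measure.map (I m) μ) :=
        lintegral_congr fun t => by rw [hslice t, hIH t]
      rw [h1, hlaw m]
      have h2 : expMeasure lam = volume.withDensity (exponentialPDF lam) := rfl
      have hpdfmeas : Measurable (exponentialPDF lam) :=
        (measurable_exponentialPDFReal lam).ennreal_ofReal
      rw [h2, lintegral_withDensity_eq_lintegral_mul _ hpdfmeas hFmeas]
      rfl
    rw [hstep]
    by_cases ha : 0 ≤ a
    · rw [if_pos ha]
      have hind : (fun t => exponentialPDF lam t * F t)
          = Set.indicator (Set.Icc 0 a)
              (fun t => ENNReal.ofReal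
                (lam * Real.exp (-(lam * b)) * (lam * (a - t)) ^ k / k.factorial)) := by
        funext t
        by_cases h0 : 0 ≤ t
        · by_cases h1 : t ≤ a
          · rw [Set.indicator_of_mem (Set.mem_Icc.mpr ⟨h0, h1⟩), exponentialPDF_of_nonneg h0]
            simp only [hF, if_pos h1]
            rw [← ENNReal.ofReal_mul (by positivity)]
            congr 1
            have he : Real.exp (-(lam * t)) * Real.exp (-(lam * (b - t)))
                = Real.exp (-(lam * b)) := by
              rw [← Real.exp_add]; ring_nf
            calc lam * Real.exp (-(lam * t)) *
                  (Real.exp (-(lam * (b - t))) * (lam * (a - t)) ^ k / ↑k.factorial)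
                = (Real.exp (-(lam * t)) * Real.exp (-(lam * (b - t)))) *
                  (lam * (lam * (a - t)) ^ k / ↑k.factorial) := by ring
              _ = lam * Real.exp (-(lam * b)) * (lam * (a - t)) ^ k / ↑k.factorial := by
                  rw [he]; ring
          · rw [Set.indicator_of_notMem (fun hm => h1 (Set.mem_Icc.mp hm).2)]
            simp only [hF, if_neg h1, mul_zero]
        · rw [Set.indicator_of_notMem (fun hm => h0 (Set.mem_Icc.mp hm).1),
            exponentialPDF_of_neg (lt_of_not_ge h0), zero_mul]
      rw [hind, lintegral_indicator measurableSet_Icc]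
      have hInt : IntegrableOn
          (fun t => lam * Real.exp (-(lam * b)) * (lam * (a - t)) ^ k / k.factorial)
          (Set.Icc 0 a) := by
        apply Continuous.integrableOn_Icc
        fun_prop
      have hnn : 0 ≤ᵐ[volume.restrict (Set.Icc 0 a)]
          fun t => lam * Real.exp (-(lam * b)) * (lam * (a - t)) ^ k / k.factorial := by
        refine (ae_restrict_iff' measurableSet_Icc).2 (ae_of_all _ fun t ht => ?_)
        have hp : 0 ≤ (lam * (a - t)) ^ k := pow_nonneg (mul_nonneg hlam.le (sub_nonneg.2 ht.2)) k
        exact div_nonneg (mul_nonneg (mul_nonneg hlam.le (Real.exp_pos _).le) hp)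
          (Nat.cast_nonneg _)
      rw [← MeasureTheory.ofReal_integral_eq_lintegral_ofReal hInt hnn]
      congr 1
      rw [MeasureTheory.integral_Icc_eq_integral_Ioc, ← intervalIntegral.integral_of_le ha]
      have hfun : ∀ t : ℝ, lam * Real.exp (-(lam * b)) * (lam * (a - t)) ^ k / k.factorial
          = (lam ^ (k + 1) * Real.exp (-(lam * b)) / k.factorial) * (a - t) ^ k := by
        intro t; rw [mul_pow]; ring
      simp only [hfun]
      rw [intervalIntegral.integral_const_mul,
        intervalIntegral.integral_comp_sub_left (fun s => s ^ k) a]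
      simp only [sub_self, sub_zero]
      rw [integral_pow, zero_pow (Nat.succ_ne_zero k)]
      rw [mul_pow, Nat.factorial_succ]
      have hk : (k.factorial : ℝ) ≠ 0 := Nat.cast_ne_zero.2 k.factorial_ne_zero
      push_cast
      field_simp
      ring
    · rw [if_neg ha]
      have hz : ∀ t, exponentialPDF lam t * F t = 0 := by
        intro t
        by_cases h : t ≤ a
        · rw [exponentialPDF_of_neg (lt_of_le_of_lt h (lt_of_not_ge ha)), zero_mul]
        · simp only [hF, if_neg h, mul_zero]
      rw [lintegral_congr hz, lintegral_zero]

end Aux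

open ProbabilityTheory Real Set in
/-- With i.i.d. `Exp(λ)` interdistances and coverage radius `R`, the first hop of the
shortest path has CDF `F_{τ_1}(x) = e^{-λ(R-x)}(1-e^{-λx})` for `0 ≤ x ≤ R` and
`F_{τ_1}(x) = 1 - e^{-λx}` for `x ≥ R`. -/
theorem stmt13 {Ω : Type*} [MeasurableSpace Ω] (μ : Measure Ω) [IsProbabilityMeasure μ]
    (lam R : ℝ) (hlam : 0 < lam) (hR : 0 < R)
    (I : ℕ → Ω → ℝ) (hmeas : ∀ n, Measurable (I n))
    (hindep : ProbabilityTheory.iIndepFun I μ)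
    (hCDF : ∀ n, ∀ x : ℝ, 0 ≤ x →
      (μ {ω | I n ω ≤ x}).toReal = 1 - Real.exp (-(lam * x)))
    (hCDFneg : ∀ n, ∀ x : ℝ, x < 0 → μ {ω | I n ω ≤ x} = 0) :
    (∀ x : ℝ, 0 ≤ x → x ≤ R →
      (μ {ω | firstHop I R ω ≤ x}).toReal
        = Real.exp (-(lam * (R - x))) * (1 - Real.exp (-(lam * x))))
    ∧ (∀ x : ℝ, R ≤ x →
      (μ {ω | firstHop I R ω ≤ x}).toReal = 1 - Real.exp (-(lam * x))) := by
  classical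
  have hlaw : ∀ n, Measure.map (I n) μ = expMeasure lam :=
    fun n => expLaw μ hlam (hmeas n) (hCDF n) (hCDFneg n)
  set G : Set Ω := {ω | ∀ n, 0 < I n ω} with hGdef
  have hGmeas : MeasurableSet G := by
    have h : G = ⋂ n, {ω | 0 < I n ω} := by ext ω; simp [hGdef]
    rw [h]
    exact MeasurableSet.iInter fun n => measurableSet_lt measurable_const (hmeas n)
  have hpos0 : ∀ n, μ {ω | I n ω ≤ 0} = 0 := by
    intro n
    have h := hCDF n 0 le_rfl
    simp only [mul_zero, neg_zero, Real.exp_zero, sub_self] at h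
    exact ((ENNReal.toReal_eq_zero_iff _).1 h).resolve_right (measure_ne_top μ _)
  have hG1 : μ Gᶜ = 0 := by
    have hsub : Gᶜ ⊆ ⋃ n, {ω | I n ω ≤ 0} := by
      intro ω hω
      simp only [hGdef, Set.mem_compl_iff, Set.mem_setOf_eq, not_forall, not_lt] at hω
      obtain ⟨n, hn⟩ := hω
      exact Set.mem_iUnion.mpr ⟨n, hn⟩
    refine le_antisymm ((measure_mono hsub).trans ?_) zero_le
    refine (measure_iUnion_le _).trans ?_
    simp [hpos0]
  have hGmem : ∀ᵐ ω ∂μ, ω ∈ G := by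
    rw [MeasureTheory.ae_iff]
    exact hG1
  -- strict monotonicity of partial sums on G
  have hSmono : ∀ ω : Ω, ω ∈ G → StrictMono fun n => vehiclePos I n ω := by
    intro ω hp
    apply strictMono_nat_of_lt_succ
    intro n
    have h1 : vehiclePos I (n + 1) ω = vehiclePos I n ω + I (n + 1) ω :=
      Finset.sum_range_succ _ _
    have h2 : 0 < I (n + 1) ω := hp (n + 1)
    rw [h1]; linarith
  -- almost surely some partial sum exceeds R
  have hprod : ∀ n : ℕ, μ (⋂ i ∈ Finset.range (n + 1), {ω | I i ω ≤ R})
      = ENNReal.ofReal (1 - Real.exp (-(lam * R))) ^ (n + 1) := by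
    intro n
    show μ (⋂ i ∈ Finset.range (n + 1), I i ⁻¹' Set.Iic R) = _
    rw [hindep.meas_biInter (fun i _ => ⟨Set.Iic R, measurableSet_Iic, rfl⟩)]
    have hIR : ∀ i : ℕ, μ (I i ⁻¹' Set.Iic R) = ENNReal.ofReal (1 - Real.exp (-(lam * R))) := by
      intro i
      show μ {ω | I i ω ≤ R} = _
      rw [← hCDF i R hR.le, ENNReal.ofReal_toReal (measure_ne_top μ _)]
    rw [Finset.prod_congr rfl fun i _ => hIR i, Finset.prod_const, Finset.card_range]
  have hG2 : μ {ω | ω ∈ G ∧ ∀ n, vehiclePos I n ω ≤ R} = 0 := by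
    set q := ENNReal.ofReal (1 - Real.exp (-(lam * R))) with hq
    have hqlt : q < 1 := by
      rw [hq, ← ENNReal.ofReal_one]
      exact (ENNReal.ofReal_lt_ofReal_iff one_pos).2 (by nlinarith [Real.exp_pos (-(lam * R))])
    have hsub : ∀ n : ℕ, {ω | ω ∈ G ∧ ∀ n, vehiclePos I n ω ≤ R}
        ⊆ ⋂ i ∈ Finset.range (n + 1), {ω | I i ω ≤ R} := by
      intro n ω hω
      obtain ⟨hp, hb⟩ := hω
      simp only [Set.mem_iInter]
      intro i hi
      have h1 : I i ω ≤ ∑ j ∈ Finset.range (n + 1), I j ω :=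
        Finset.single_le_sum (fun j _ => (hp j).le) hi
      exact h1.trans (hb n)
    have hle : ∀ n : ℕ, μ {ω | ω ∈ G ∧ ∀ n, vehiclePos I n ω ≤ R} ≤ q ^ (n + 1) :=
      fun n => (measure_mono (hsub n)).trans (hprod n).le
    have htend : Filter.Tendsto (fun n : ℕ => q ^ (n + 1)) Filter.atTop (nhds 0) :=
      (ENNReal.tendsto_pow_atTop_nhds_zero_of_lt_one hqlt).comp
        (Filter.tendsto_add_atTop_nat 1)
    exact le_antisymm (ge_of_tendsto' htend hle) zero_le
  have hGae : ∀ᵐ ω ∂μ, ω ∈ G ∧ ∃ n, R < vehiclePos I n ω := by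
    rw [MeasureTheory.ae_iff]
    have hsub : {ω | ¬(ω ∈ G ∧ ∃ n, R < vehiclePos I n ω)}
        ⊆ Gᶜ ∪ {ω | ω ∈ G ∧ ∀ n, vehiclePos I n ω ≤ R} := by
      intro ω hω
      by_cases h : ω ∈ G
      · right
        refine ⟨h, fun n => ?_⟩
        by_contra hn
        exact hω ⟨h, ⟨n, lt_of_not_ge hn⟩⟩
      · left; exact h
    refine le_antisymm ((measure_mono hsub).trans ?_) zero_le
    refine (measure_union_le _ _).trans ?_
    rw [hG1, hG2]; simp
  refine ⟨?_, ?_⟩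
  · -- part 1
    intro x hx0 hxR
    set A : ℕ → Set Ω := fun k => hopSet I 0 (k + 1) x R with hA
    have hAmeas : ∀ k, MeasurableSet (A k) := fun k => hopSet_meas hmeas 0 (k + 1) x R
    have hAchar : ∀ (k : ℕ) (ω : Ω),
        ω ∈ A k ↔ vehiclePos I k ω ≤ x ∧ R < vehiclePos I (k + 1) ω := by
      intro k ω
      have e0 : ∀ j : ℕ, (∑ i ∈ Finset.range j, I (0 + i) ω) = ∑ i ∈ Finset.range j, I i ω :=
        fun j => Finset.sum_congr rfl fun i _ => by rw [Nat.zero_add]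
      have e1 : vehiclePos I (k + 1) ω = vehiclePos I k ω + I (k + 1) ω :=
        Finset.sum_range_succ _ _
      simp only [hA, hopSet, Set.mem_setOf_eq, e0, Nat.zero_add]
      rw [e1]
      exact Iff.rfl
    have hfh : {ω | firstHop I R ω ≤ x} =ᵐ[μ] ⋃ k, A k := by
      filter_upwards [hGae] with ω hω
      obtain ⟨hg, hex⟩ := hω
      have hsm := hSmono ω hg
      show (ω ∈ {ω | firstHop I R ω ≤ x}) = (ω ∈ ⋃ k, A k)
      simp only [Set.mem_setOf_eq, Set.mem_iUnion, eq_iff_iff]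
      constructor
      · intro hle
        unfold firstHop at hle
        split_ifs at hle with hex2
        · obtain ⟨n0, hn0⟩ := hex2
          have hbdd : BddAbove {y | (∃ n, y = vehiclePos I n ω) ∧ y ≤ R} :=
            ⟨R, fun y hy => hy.2⟩
          have hS0R : vehiclePos I 0 ω ≤ R := le_trans (hsm.monotone (Nat.zero_le n0)) hn0
          have hS0x : vehiclePos I 0 ω ≤ x := le_trans (le_csSup hbdd ⟨⟨0, rfl⟩, hS0R⟩) hle
          obtain ⟨M, hM⟩ := hex
          have hNbdd : BddAbove {n : ℕ | vehiclePos I n ω ≤ x} := by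
            refine ⟨M, fun n hn => ?_⟩
            by_contra hlt
            push_neg at hlt
            have h2 : vehiclePos I M ω ≤ vehiclePos I n ω := hsm.monotone hlt.le
            have h3 : vehiclePos I n ω ≤ x := hn
            linarith
          have hNne : Set.Nonempty {n : ℕ | vehiclePos I n ω ≤ x} := ⟨0, hS0x⟩
          have hNmem : vehiclePos I (sSup {n : ℕ | vehiclePos I n ω ≤ x}) ω ≤ x :=
            Nat.sSup_mem hNne hNbdd
          set N := sSup {n : ℕ | vehiclePos I n ω ≤ x} with hN
          refine ⟨N, (hAchar N ω).2 ⟨hNmem, ?_⟩⟩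
          by_contra hR1
          push_neg at hR1
          have h4 : vehiclePos I (N + 1) ω ≤ x :=
            le_trans (le_csSup hbdd ⟨⟨N + 1, rfl⟩, hR1⟩) hle
          have h5 : N + 1 ≤ N := le_csSup hNbdd h4
          omega
        · exact absurd ⟨0, le_trans hle hxR⟩ hex2
      · rintro ⟨k, hk⟩
        rw [hAchar k ω] at hk
        obtain ⟨hkx, hkR⟩ := hk
        unfold firstHop
        have hS0x : vehiclePos I 0 ω ≤ x := le_trans (hsm.monotone (Nat.zero_le k)) hkx
        have hex2 : ∃ n, vehiclePos I n ω ≤ R := ⟨0, le_trans hS0x hxR⟩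
        rw [if_pos hex2]
        refine csSup_le ⟨vehiclePos I 0 ω, ⟨⟨0, rfl⟩, le_trans hS0x hxR⟩⟩ ?_
        rintro y ⟨⟨n, rfl⟩, hyR⟩
        by_cases hn : n ≤ k
        · exact le_trans (hsm.monotone hn) hkx
        · push_neg at hn
          have h6 : vehiclePos I (k + 1) ω ≤ vehiclePos I n ω := hsm.monotone hn
          linarith
    have hALae : ∀ k : ℕ, (A k ∩ G : Set Ω) =ᵐ[μ] A k := by
      intro k
      filter_upwards [hGmem] with ω hg
      show (ω ∈ A k ∩ G) = (ω ∈ A k)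
      simp only [Set.mem_inter_iff, eq_iff_iff]
      exact ⟨fun h => h.1, fun h => ⟨h, hg⟩⟩
    have hdisjAG : Pairwise (Function.onFun Disjoint fun k => A k ∩ G) := by
      have hkey : ∀ i j : ℕ, i < j → Disjoint (A i ∩ G) (A j ∩ G) := by
        intro i j hij
        rw [Set.disjoint_left]
        rintro ω ⟨hAi, hGi⟩ ⟨hAj, _⟩
        rw [hAchar i ω] at hAi
        rw [hAchar j ω] at hAj
        have hsm := hSmono ω hGi
        have h1 : vehiclePos I (i + 1) ω ≤ vehiclePos I j ω := hsm.monotone hij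
        have h2 := hAi.2
        have h3 := hAj.1
        linarith
      intro i j hij
      rcases hij.lt_or_gt with h | h
      · exact hkey i j h
      · exact (hkey j i h).symm
    have hUae : (⋃ k, A k : Set Ω) =ᵐ[μ] ⋃ k, (A k ∩ G) := by
      filter_upwards [hGmem] with ω hg
      show (ω ∈ ⋃ k, A k) = (ω ∈ ⋃ k, (A k ∩ G))
      simp only [Set.mem_iUnion, Set.mem_inter_iff, eq_iff_iff]
      exact ⟨fun ⟨k, h⟩ => ⟨k, h, hg⟩, fun ⟨k, h, _⟩ => ⟨k, h⟩⟩
    have hsum : μ {ω | firstHop I R ω ≤ x} = ∑' k, μ (A k) := by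
      rw [measure_congr hfh, measure_congr hUae,
        measure_iUnion hdisjAG fun k => (hAmeas k).inter hGmeas]
      exact tsum_congr fun k => measure_congr (hALae k)
    have hAval : ∀ k : ℕ, μ (A k)
        = ENNReal.ofReal
            (Real.exp (-(lam * R)) * ((lam * x) ^ (k + 1) / ((k + 1).factorial : ℝ))) := by
      intro k
      simp only [hA]
      rw [key μ hlam hmeas hlaw hindep (k + 1) 0 x R hxR, if_pos hx0, mul_div_assoc]
    rw [hsum]
    have hsummable : Summable (fun k : ℕ => (lam * x) ^ (k + 1) / ((k + 1).factorial : ℝ)) :=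
      (summable_nat_add_iff 1).2 (Real.summable_pow_div_factorial _)
    have hnn : ∀ k : ℕ,
        0 ≤ Real.exp (-(lam * R)) * ((lam * x) ^ (k + 1) / ((k + 1).factorial : ℝ)) := by
      intro k
      have h1 : 0 ≤ (lam * x) ^ (k + 1) := pow_nonneg (mul_nonneg hlam.le hx0) _
      exact mul_nonneg (Real.exp_pos _).le (div_nonneg h1 (Nat.cast_nonneg _))
    calc (∑' k, μ (A k)).toReal
        = (ENNReal.ofReal (Real.exp (-(lam * R)) * (Real.exp (lam * x) - 1))).toReal := by
          congr 1
          rw [tsum_congr hAval, ← ENNReal.ofReal_tsum_of_nonneg hnn (hsummable.mul_left _)]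
          congr 1
          rw [tsum_mul_left]
          congr 1
          have hexp : ∑' n : ℕ, (lam * x) ^ n / (n.factorial : ℝ) = Real.exp (lam * x) := by
            rw [Real.exp_eq_exp_ℝ, NormedSpace.exp_eq_tsum_div]
          have h0 := Summable.tsum_eq_zero_add (Real.summable_pow_div_factorial (lam * x))
          rw [hexp] at h0
          simp only [pow_zero, Nat.factorial_zero, Nat.cast_one] at h0
          linarith
      _ = Real.exp (-(lam * (R - x))) * (1 - Real.exp (-(lam * x))) := by
          rw [ENNReal.toReal_ofReal (mul_nonneg (Real.exp_pos _).le
            (by nlinarith [Real.one_le_exp (mul_nonneg hlam.le hx0)]))]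
          have h1 : Real.exp (-(lam * (R - x)))
              = Real.exp (-(lam * R)) * Real.exp (lam * x) := by
            rw [← Real.exp_add]; ring_nf
          have h2 : Real.exp (lam * x) * Real.exp (-(lam * x)) = 1 := by
            rw [← Real.exp_add]
            norm_num
          rw [h1]
          linear_combination Real.exp (-(lam * R)) * h2
  · -- part 2
    intro x hx
    have hx0 : (0:ℝ) ≤ x := le_trans hR.le hx
    have hae : {ω | firstHop I R ω ≤ x} =ᵐ[μ] {ω | I 0 ω ≤ x} := by
      filter_upwards [hGmem] with ω hg
      have hsm := hSmono ω hg
      have h00 : vehiclePos I 0 ω = I 0 ω := by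
        simp [vehiclePos]
      show (ω ∈ {ω | firstHop I R ω ≤ x}) = (ω ∈ {ω | I 0 ω ≤ x})
      simp only [Set.mem_setOf_eq, eq_iff_iff]
      unfold firstHop
      split_ifs with h
      · obtain ⟨n, hn⟩ := h
        have hS0R : vehiclePos I 0 ω ≤ R := le_trans (hsm.monotone (Nat.zero_le n)) hn
        constructor
        · intro _
          rw [← h00]
          exact le_trans hS0R hx
        · intro _
          exact le_trans
            (csSup_le ⟨vehiclePos I 0 ω, ⟨⟨0, rfl⟩, hS0R⟩⟩ fun y hy => hy.2) hx
      · rw [h00]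
    rw [measure_congr hae, hCDF 0 x hx0]
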